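/- For q > 0, the function w ↦ 1 / log(1 + q/w) is strictly concave on (0, ∞). -/

import Mathlib

open Real Set

lemma key_ineq {w : ℝ} (hw : 0 < w) {t : ℝ} (ht : 0 < t) :
    2 * t < (2 * w + t) * Real.log (1 + t / w) := by
  set ψ : ℝ → ℝ := fun t => (2 * w + t) * Real.log (1 + t / w) - 2 * t with hψ
  have hpos : ∀ s : ℝ, 0 ≤ s → 0 < 1 + s / w := fun s hs => by positivity
  have hmono : StrictMonoOn ψ (Ici 0) := by
    apply strictMonoOn_of_deriv_pos (convex_Ici 0)
    · apply ContinuousOn.sub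
      · exact (continuousOn_const.add continuousOn_id).mul
          ((continuousOn_const.add (continuousOn_id.div_const w)).log
            fun s hs => (hpos s hs).ne')
      · exact continuousOn_const.mul continuousOn_id
    · intro s hs
      rw [interior_Ici] at hs
      have hs' : (0:ℝ) < s := hs
      have hws : (0:ℝ) < w + s := by linarith
      have h1 : HasDerivAt (fun t : ℝ => 1 + t / w) (1 / w) s := by
        simpa using ((hasDerivAt_id s).div_const w).const_add 1
      have h2 : HasDerivAt (fun t : ℝ => Real.log (1 + t / w)) ((1/w) / (1 + s/w)) s :=
        h1.log (hpos s hs'.le).ne'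
      have h3 : HasDerivAt ψ
          (1 * Real.log (1 + s/w) + (2*w + s) * ((1/w) / (1 + s/w)) - 2) s := by
        have ha : HasDerivAt (fun t : ℝ => 2*w + t) 1 s := (hasDerivAt_id s).const_add (2*w)
        have hb : HasDerivAt (fun t : ℝ => 2 * t) 2 s := by
          simpa using (hasDerivAt_id s).const_mul 2
        exact (ha.mul h2).sub hb
      rw [h3.deriv]
      have e1 : 1 + s/w = (w+s)/w := by field_simp
      have e2 : (1:ℝ)/w / (1 + s/w) = 1/(w+s) := by
        rw [e1]; field_simp
      have hlog : Real.log (w/(w+s)) < w/(w+s) - 1 := by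
        apply Real.log_lt_sub_one_of_pos (by positivity)
        intro h
        have : w = w + s := by
          field_simp at h; linarith
        linarith
      have hlog2 : Real.log (w/(w+s)) = - Real.log (1 + s/w) := by
        rw [e1, Real.log_div hw.ne' hws.ne', Real.log_div hws.ne' hw.ne']
        ring
      have hA : s/(w+s) < Real.log (1 + s/w) := by
        rw [hlog2] at hlog
        have : w/(w+s) - 1 = -(s/(w+s)) := by field_simp; ring
        linarith [hlog, this ▸ hlog]
      rw [e2]
      have e3 : s/(w+s) + (2*w+s) * (1/(w+s)) - 2 = 0 := by
        field_simp
        ring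
      linarith
  have h0 : ψ 0 = 0 := by simp [hψ]
  have := hmono (self_mem_Ici) (mem_Ici.mpr ht.le) ht
  rw [h0] at this
  simp only [hψ] at this
  linarith

theorem stmt5 (q : ℝ) (hq : 0 < q) :
    StrictConcaveOn ℝ (Set.Ioi (0 : ℝ)) (fun w => 1 / Real.log (1 + q / w)) := by
  set L : ℝ → ℝ := fun w => Real.log (1 + q / w) with hLdef
  set f : ℝ → ℝ := fun w => 1 / L w with hfdef
  set f1 : ℝ → ℝ := fun w => q / (w * (w + q) * (L w)^2) with hf1def
  have hfacts : ∀ w : ℝ, 0 < w → 0 < 1 + q / w ∧ 0 < L w := by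
    intro w hw
    have h1 : 1 < 1 + q / w := by
      have : 0 < q / w := by positivity
      linarith
    exact ⟨by linarith, Real.log_pos h1⟩
  -- derivative of L
  have hL' : ∀ w : ℝ, 0 < w → HasDerivAt L (-q / (w * (w + q))) w := by
    intro w hw
    have hA := (hfacts w hw).1
    have h0 : HasDerivAt (fun x : ℝ => 1 + q / x) (-(q / w^2)) w := by
      have := ((hasDerivAt_inv hw.ne').const_mul q).const_add 1
      convert this using 1
      · rfl
      · rfl
      · funext x; ring
      · field_simp
    have h2 := h0.log hA.ne'
    convert h2 using 1
    rw [show (1:ℝ) + q/w = (w+q)/w by field_simp]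
    field_simp
  -- derivative of f
  have hDf : ∀ w : ℝ, 0 < w → HasDerivAt f (f1 w) w := by
    intro w hw
    obtain ⟨hA, hL⟩ := hfacts w hw
    have h3 := (hasDerivAt_const w (1:ℝ)).div (hL' w hw) hL.ne'
    convert h3 using 1
    · rfl
    · rfl
    · rfl
    show f1 w = _
    simp only [hf1def]
    rw [div_eq_div_iff (by positivity) (by positivity)]
    field_simp
    ring
  -- derivative of f1
  have hDf1 : ∀ w : ℝ, 0 < w →
      HasDerivAt f1 (-(q * ((2*w+q) * L w - 2*q)) / (w^2 * (w+q)^2 * (L w)^3)) w := by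
    intro w hw
    obtain ⟨hA, hL⟩ := hfacts w hw
    have hwq : (0:ℝ) < w + q := by linarith
    have hL2 := hL' w hw
    have hD : HasDerivAt (fun x => x * (x + q) * (L x)^2)
        ((1 * (w + q) + w * 1) * (L w)^2 + (w * (w + q)) * (2 * L w ^ 1 * (-q / (w * (w + q))))) w := by
      exact ((hasDerivAt_id w).mul ((hasDerivAt_id w).add_const q)).mul (hL2.pow 2)
    have hDne : w * (w + q) * (L w)^2 ≠ 0 := by positivity
    have h4 := (hasDerivAt_const w q).div hD hDne
    convert h4 using 1
    · rfl
    · rfl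
    · rfl
    rw [div_eq_div_iff (by positivity) (by positivity)]
    field_simp
    ring
  apply strictConcaveOn_of_deriv2_neg (convex_Ioi 0)
  · intro x hx
    exact ((hDf x hx).continuousAt).continuousWithinAt
  · intro x hx
    rw [interior_Ioi] at hx
    have hx' : (0:ℝ) < x := hx
    obtain ⟨hA, hL⟩ := hfacts x hx'
    have hev : (deriv f) =ᶠ[nhds x] f1 := by
      filter_upwards [Ioi_mem_nhds hx'] with y hy
      exact (hDf y hy).deriv
    have h2 : deriv (deriv f) x = deriv f1 x := hev.deriv_eq
    have h3 : deriv f1 x = -(q * ((2*x+q) * L x - 2*q)) / (x^2 * (x+q)^2 * (L x)^3) :=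
      (hDf1 x hx').deriv
    show deriv^[2] f x < 0
    rw [Function.iterate_succ, Function.iterate_one, Function.comp_apply, h2, h3]
    apply div_neg_of_neg_of_pos
    · have hkey := key_ineq hx' hq
      have : 2 * q < (2 * x + q) * L x := by
        simpa [hLdef] using hkey
      nlinarith
    · have hxq : (0:ℝ) < x + q := by linarith
      exact mul_pos (mul_pos (pow_pos hx' 2) (pow_pos hxq 2)) (pow_pos hL 3)
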